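/- Let A, B, C be groups and let φ : C → A and ψ : C → B be injective group homomorphisms whose images are proper subgroups (φ(C) ≠ A and ψ(C) ≠ B). Then the amalgamated free product A *_C B (the pushout of the diagram A ← C → B in the category of groups) is an infinite group. -/

import Mathlib

universe u

/-- The two-group family indexed by `Bool`: `A` at `true` and `B` at `false`. -/
def twoFam (A B : Type u) : Bool → Type u := fun i => Bool.rec B A i

instance twoFamGroup (A B : Type u) [Group A] [Group B] : ∀ i, Group (twoFam A B i)
  | true => ‹Group A›
  | false => ‹Group B›

/-- The pair of homomorphisms `φ : C →* A`, `ψ : C →* B` as a family indexed by `Bool`. -/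
def twoHoms {A B : Type u} {C : Type*} [Group A] [Group B] [Group C]
    (φ : C →* A) (ψ : C →* B) : ∀ i, C →* twoFam A B i
  | true => φ
  | false => ψ

/-- The alternating list of letters `[a, b, a, b, ...]` of length `2*n`. -/
def altList {A B : Type u} (a : A) (b : B) : ℕ → List (Σ i, twoFam A B i)
  | 0 => []
  | n + 1 => ⟨true, a⟩ :: ⟨false, b⟩ :: altList a b n

theorem altList_ne_one {A B : Type u} [Group A] [Group B] {a : A} {b : B}
    (ha : a ≠ 1) (hb : b ≠ 1) (n : ℕ) :
    ∀ l ∈ altList a b n, Sigma.snd l ≠ (1 : twoFam A B l.1) := by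
  induction n with
  | zero => simp [altList]
  | succ n ih =>
    intro l hl
    simp only [altList, List.mem_cons] at hl
    rcases hl with rfl | rfl | h
    · exact ha
    · exact hb
    · exact ih l h

theorem altList_chain {A B : Type u} {a : A} {b : B} (n : ℕ) :
    (altList a b n).Chain' (fun l l' => l.1 ≠ l'.1) := by
  induction n with
  | zero => simp [altList, List.Chain']
  | succ n ih =>
    cases n with
    | zero => simp [altList, List.Chain']
    | succ m =>
      rw [show altList a b (m + 1) = ⟨true, a⟩ :: ⟨false, b⟩ :: altList a b m from rfl] at ih
      exact List.isChain_cons_cons.2 ⟨by simp, List.isChain_cons_cons.2 ⟨by simp, ih⟩⟩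

/-- If `φ : C →* A` and `ψ : C →* B` are injective with proper images, then the
amalgamated free product `A *_C B` (the pushout of `A ← C → B`) is infinite. -/
theorem stmt_9 {A B : Type u} {C : Type*} [Group A] [Group B] [Group C]
    (φ : C →* A) (ψ : C →* B)
    (hφ : Function.Injective φ) (hψ : Function.Injective ψ)
    (hA : φ.range ≠ ⊤) (hB : ψ.range ≠ ⊤) :
    Infinite (Monoid.PushoutI (twoHoms φ ψ)) := by
  classical
  obtain ⟨a, ha⟩ : ∃ a : A, a ∉ φ.range := by
    by_contra h
    push_neg at h
    exact hA (Subgroup.eq_top_iff' _ |>.2 h)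
  obtain ⟨b, hb⟩ : ∃ b : B, b ∉ ψ.range := by
    by_contra h
    push_neg at h
    exact hB (Subgroup.eq_top_iff' _ |>.2 h)
  have ha1 : a ≠ 1 := fun h => ha (h ▸ one_mem _)
  have hb1 : b ≠ 1 := fun h => hb (h ▸ one_mem _)
  set Φ := twoHoms φ ψ with hΦ
  have hΦinj : ∀ i, Function.Injective (Φ i) := by
    intro i; cases i
    · exact hψ
    · exact hφ
  -- the words
  let w : ℕ → Monoid.CoprodI.Word (twoFam A B) := fun n =>
    ⟨altList a b n, altList_ne_one ha1 hb1 n, altList_chain n⟩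
  have hred : ∀ n, Monoid.PushoutI.Reduced Φ (w n) := by
    intro n g hg
    induction n with
    | zero => simp [w, altList] at hg
    | succ n ih =>
      simp only [w, altList, List.mem_cons] at hg
      rcases hg with rfl | rfl | h
      · exact ha
      · exact hb
      · exact ih (by simpa [w] using h)
  have hprod : ∀ n, (w n).prod =
      ((Monoid.CoprodI.of (M := twoFam A B) (i := true) a) *
        (Monoid.CoprodI.of (M := twoFam A B) (i := false) b)) ^ n := by
    intro n
    induction n with
    | zero => simp [w, Monoid.CoprodI.Word.prod, altList]
    | succ n ih =>
      have : (w (n+1)).toList = ⟨true, a⟩ :: ⟨false, b⟩ :: (w n).toList := rfl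
      rw [pow_succ']
      rw [← ih]
      simp only [Monoid.CoprodI.Word.prod, this, List.map_cons, List.prod_cons, mul_assoc]
  set x : Monoid.PushoutI Φ :=
    Monoid.PushoutI.of (φ := Φ) true a * Monoid.PushoutI.of (φ := Φ) false b with hx
  have hxpow : ∀ n, x ^ n = Monoid.PushoutI.ofCoprodI (φ := Φ) ((w n).prod) := by
    intro n
    rw [hprod, map_pow, map_mul]
    erw [Monoid.PushoutI.ofCoprodI_of, Monoid.PushoutI.ofCoprodI_of false]
  have hfin : ¬ IsOfFinOrder x := by
    intro hfo
    obtain ⟨n, hn, hxn⟩ := hfo.exists_pow_eq_one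
    have h1 : Monoid.PushoutI.ofCoprodI (φ := Φ) ((w n).prod) ∈
        (Monoid.PushoutI.base Φ).range := by
      rw [← hxpow, hxn]; exact one_mem _
    have := Monoid.PushoutI.Reduced.eq_empty_of_mem_range hΦinj (hred n) h1
    have hlist : (w n).toList = [] := by rw [this]; rfl
    cases n with
    | zero => omega
    | succ m => simp [w, altList] at hlist
  exact Infinite.of_injective (fun n : ℕ => x ^ n)
    (injective_pow_iff_not_isOfFinOrder.2 hfin)
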